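/- Let Y be a 2-connected ladder, π : k[Y] → R_2(Y) the quotient map, i ∈ {1,…,h+1}, and e ≥ 1. Let Q_i be the ideal of k[Y] generated by the variables X_{a_{i−1},q} with (a_{i−1},q) ∈ Y, and let J = Q_i^e. Then for every monomial ideal M of k[Y], the images satisfy π(J) ∩ π(M) = π(J ∩ M) as ideals of R_2(Y); in particular π(J) ∩ π(M) is generated by the images of the least common multiples of the monomial generators of J and of M. -/
import Mathlib


set_option maxHeartbeats 1000000
set_option synthInstance.maxHeartbeats 1000000

open CategoryTheory

namespace LadderDet

/-- The position `p` lies in the `m × n` grid `{1,…,m} × {1,…,n}`. -/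
def InGrid (m n : ℕ) (p : ℕ × ℕ) : Prop :=
  1 ≤ p.1 ∧ p.1 ≤ m ∧ 1 ≤ p.2 ∧ p.2 ≤ n

/-- `Y` is a ladder in the `m × n` grid. -/
def IsLadder (m n : ℕ) (Y : Set (ℕ × ℕ)) : Prop :=
  (∀ p ∈ Y, InGrid m n p) ∧
  ∀ i j p q : ℕ, (i, j) ∈ Y → (p, q) ∈ Y → i ≤ p → j ≤ q → (i, q) ∈ Y ∧ (p, j) ∈ Y

/-- A ladder together with the standard nontriviality assumptions:
`(1,n), (m,1) ∈ Y` and every row and every column of the grid meets `Y`. -/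
def StdLadder (m n : ℕ) (Y : Set (ℕ × ℕ)) : Prop :=
  IsLadder m n Y ∧ (1, n) ∈ Y ∧ (m, 1) ∈ Y ∧
  (∀ i, 1 ≤ i → i ≤ m → ∃ j, (i, j) ∈ Y) ∧
  (∀ j, 1 ≤ j → j ≤ n → ∃ i, (i, j) ∈ Y)

/-- Two positions differ by exactly `1` in exactly one coordinate. -/
def AdjStep (p q : ℕ × ℕ) : Prop :=
  (p.1 = q.1 ∧ (p.2 + 1 = q.2 ∨ q.2 + 1 = p.2)) ∨
  (p.2 = q.2 ∧ (p.1 + 1 = q.1 ∨ q.1 + 1 = p.1))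

/-- There is a path in `Y` from `p` to `q`. -/
def HasPath (Y : Set (ℕ × ℕ)) (p q : ℕ × ℕ) : Prop :=
  p ∈ Y ∧ q ∈ Y ∧
    Relation.ReflTransGen (fun a b => a ∈ Y ∧ b ∈ Y ∧ AdjStep a b) p q

/-- `Y` is path-connected. -/
def PathConnected (Y : Set (ℕ × ℕ)) : Prop :=
  ∀ p ∈ Y, ∀ q ∈ Y, HasPath Y p q

/-- `M` is (the set of entries of) a `t × t` minor of `Y`. -/
def IsMinor (t : ℕ) (Y : Set (ℕ × ℕ)) (M : Set (ℕ × ℕ)) : Prop :=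
  ∃ r c : Fin t → ℕ, StrictMono r ∧ StrictMono c ∧
    (∀ u v, (r u, c v) ∈ Y) ∧ M = {p | ∃ u v, p = (r u, c v)}

/-- `Y` is `t`-disconnected. -/
def TDisconnected (m n t : ℕ) (Y : Set (ℕ × ℕ)) : Prop :=
  ∃ Z₁ Z₂ : Set (ℕ × ℕ), Z₁.Nonempty ∧ Z₂.Nonempty ∧
    IsLadder m n Z₁ ∧ IsLadder m n Z₂ ∧ Z₁ ∩ Z₂ = ∅ ∧ Z₁ ∪ Z₂ = Y ∧
    ∀ M, IsMinor t Y M → M ⊆ Z₁ ∨ M ⊆ Z₂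

/-- `Y` is `t`-connected. -/
def TConnected (m n t : ℕ) (Y : Set (ℕ × ℕ)) : Prop := ¬ TDisconnected m n t Y

/-- `p` is a lower inside corner of `Y`. -/
def IsLowerCorner (Y : Set (ℕ × ℕ)) (p : ℕ × ℕ) : Prop :=
  p ∈ Y ∧ (p.1 - 1, p.2) ∈ Y ∧ (p.1, p.2 - 1) ∈ Y ∧ (p.1 - 1, p.2 - 1) ∉ Y

/-- `p` is an upper inside corner of `Y`. -/
def IsUpperCorner (Y : Set (ℕ × ℕ)) (p : ℕ × ℕ) : Prop :=
  p ∈ Y ∧ (p.1 + 1, p.2) ∈ Y ∧ (p.1, p.2 + 1) ∈ Y ∧ (p.1 + 1, p.2 + 1) ∉ Y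

/-- `Y` is one-sided: path-connected and with no lower or no upper inside corners. -/
def OneSided (Y : Set (ℕ × ℕ)) : Prop :=
  PathConnected Y ∧
  ((∀ p, ¬ IsLowerCorner Y p) ∨ (∀ p, ¬ IsUpperCorner Y p))

/-- `Y` is two-sided: path-connected with at least one lower and one upper inside corner. -/
def TwoSided (Y : Set (ℕ × ℕ)) : Prop :=
  PathConnected Y ∧ (∃ p, IsLowerCorner Y p) ∧ (∃ p, IsUpperCorner Y p)

section Algebra

variable (k : Type) [Field k]

/-- The `t × t` minor of the generic matrix determined by rows `r` and columns `c`,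
as an element of the polynomial ring `k[Y]`. -/
noncomputable def minorPoly {t : ℕ} {Y : Set (ℕ × ℕ)} (r c : Fin t → ℕ)
    (h : ∀ u v, (r u, c v) ∈ Y) : MvPolynomial Y k :=
  (Matrix.of fun u v : Fin t =>
    (MvPolynomial.X ⟨(r u, c v), h u v⟩ : MvPolynomial Y k)).det

/-- The ideal `I_t(Y) ⊆ k[Y]` generated by all `t × t` minors of `X` lying in `Y`. -/
noncomputable def minorIdeal (t : ℕ) (Y : Set (ℕ × ℕ)) : Ideal (MvPolynomial Y k) :=
  Ideal.span {f | ∃ (r c : Fin t → ℕ) (_ : StrictMono r) (_ : StrictMono c)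
    (h : ∀ u v, (r u, c v) ∈ Y), f = minorPoly k r c h}

/-- The ladder determinantal ring `R_t(Y) = k[Y]/I_t(Y)`. -/
abbrev LadderRing (t : ℕ) (Y : Set (ℕ × ℕ)) : Type :=
  MvPolynomial Y k ⧸ minorIdeal k t Y

/-- The residue `x_{ij}` of the variable `X_{ij}` in `R_t(Y)`. -/
noncomputable def xres (t : ℕ) {Y : Set (ℕ × ℕ)} (p : ℕ × ℕ) (hp : p ∈ Y) :
    LadderRing k t Y :=
  Ideal.Quotient.mk (minorIdeal k t Y) (MvPolynomial.X ⟨p, hp⟩)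

/-- The ideal of `R_2(Y)` generated by the residues of the variables in row `r`
(an ideal of type `𝔮`). -/
noncomputable def rowIdeal (Y : Set (ℕ × ℕ)) (r : ℕ) : Ideal (LadderRing k 2 Y) :=
  Ideal.span {z | ∃ q, ∃ h : (r, q) ∈ Y, z = xres k 2 (r, q) h}

/-- The ideal of `R_2(Y)` generated by the residues of the variables in column `b`
(an ideal of type `𝔮'`). -/
noncomputable def colIdeal (Y : Set (ℕ × ℕ)) (b : ℕ) : Ideal (LadderRing k 2 Y) :=
  Ideal.span {z | ∃ p, ∃ h : (p, b) ∈ Y, z = xres k 2 (p, b) h}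

/-- The ideal `𝔭` of `R_2(Y)` generated by the residues of the variables weakly
northwest of the position `(c, d)`. -/
noncomputable def cornerIdeal (Y : Set (ℕ × ℕ)) (c d : ℕ) : Ideal (LadderRing k 2 Y) :=
  Ideal.span {z | ∃ p q, ∃ h : (p, q) ∈ Y, p ≤ c ∧ q ≤ d ∧ z = xres k 2 (p, q) h}

end Algebra

/-- An ideal of `k[Y]` is a monomial ideal if it is generated by monomials. -/
def IsMonomialIdeal {k : Type} [Field k] {Y : Set (ℕ × ℕ)}
    (M : Ideal (MvPolynomial Y k)) : Prop :=
  ∃ S : Set (Y →₀ ℕ), M = Ideal.span ((fun d => MvPolynomial.monomial d (1 : k)) '' S)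

/-- A finitely generated module `C` over a commutative ring `R` is semidualizing if
the natural homothety map `R → Hom_R(C, C)` is bijective and `Ext^i_R(C, C) = 0` for
all `i ≥ 1`. -/
def IsSemidualizing {R : Type} [CommRing R] (C : ModuleCat.{0} R) : Prop :=
  Module.Finite R C ∧
  Function.Bijective (LinearMap.lsmul R C) ∧
  ∀ i : ℕ, 1 ≤ i →
    Subsingleton (((Ext R (ModuleCat.{0} R) i).obj (Opposite.op C)).obj C)

/-- `C` has finite injective dimension: for some `n`, `Ext^i_R(M, C) = 0` for all
modules `M` and all `i > n`. -/
def HasFiniteInjDim {R : Type} [CommRing R] (C : ModuleCat.{0} R) : Prop :=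
  ∃ n : ℕ, ∀ i : ℕ, n < i → ∀ M : ModuleCat.{0} R,
    Subsingleton (((Ext R (ModuleCat.{0} R) i).obj (Opposite.op M)).obj C)


section AuxRowGrading

open MvPolynomial Classical

variable {k : Type} [Field k] {Y : Set (ℕ × ℕ)}

/-- Weight of a variable: `1` if it lies in row `r`, else `0`. -/
def rwt (r : ℕ) (v : Y) : ℕ := if (v : ℕ × ℕ).1 = r then 1 else 0

/-- Weighted (row-`r`) degree of an exponent vector. -/
def wdeg (r : ℕ) (d : Y →₀ ℕ) : ℕ := d.sum fun v c => c * rwt r v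

theorem wdeg_add (r : ℕ) (a b : Y →₀ ℕ) : wdeg r (a + b) = wdeg r a + wdeg r b :=
  Finsupp.sum_add_index' (fun _ => zero_mul _) (fun _ _ _ => add_mul _ _ _)

theorem wdeg_single (r : ℕ) (v : Y) (c : ℕ) :
    wdeg r (Finsupp.single v c) = c * rwt r v :=
  Finsupp.sum_single_index (zero_mul _)

/-- The part of a polynomial supported on exponents satisfying `p`. -/
noncomputable def pfil (p : (Y →₀ ℕ) → Prop) (f : MvPolynomial Y k) : MvPolynomial Y k :=
  ∑ d ∈ f.support.filter (fun d => p d), monomial d (coeff d f)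

theorem coeff_pfil (p : (Y →₀ ℕ) → Prop) (f : MvPolynomial Y k) (D : Y →₀ ℕ) :
    coeff D (pfil p f) = if p D then coeff D f else 0 := by
  classical
  rw [pfil, coeff_sum]
  rw [Finset.sum_congr rfl (fun d _ => coeff_monomial D d (coeff d f))]
  rw [Finset.sum_ite_eq' (f.support.filter fun d => p d) D (fun d => coeff d f)]
  by_cases hp : p D
  · by_cases hs : D ∈ f.support
    · simp [hp, hs]
    · have h0 : coeff D f = 0 := not_not.mp fun h => hs (mem_support_iff.mpr h)
      simp [hp, hs, h0]
  · simp [hp]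

theorem pfil_add (p : (Y →₀ ℕ) → Prop) (f g : MvPolynomial Y k) :
    pfil p (f + g) = pfil p f + pfil p g := by
  apply MvPolynomial.ext
  intro D
  simp only [coeff_add, coeff_pfil]
  split <;> simp

/-- `pfil` bundled as an additive homomorphism. -/
noncomputable def pfilHom (p : (Y →₀ ℕ) → Prop) :
    MvPolynomial Y k →+ MvPolynomial Y k :=
  AddMonoidHom.mk' (pfil p) (pfil_add p)

/-- `s` is weighted-homogeneous of degree `δ` for the row-`r` weight. -/
def RHomog (r δ : ℕ) (s : MvPolynomial Y k) : Prop :=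
  ∀ d, coeff d s ≠ 0 → wdeg r d = δ

theorem pfil_mul_homog (r e δ : ℕ) (g s : MvPolynomial Y k) (hs : RHomog r δ s) :
    pfil (fun d => e ≤ wdeg r d) (g * s)
      = pfil (fun d => e ≤ wdeg r d + δ) g * s := by
  apply MvPolynomial.ext
  intro D
  rw [coeff_pfil, coeff_mul, coeff_mul]
  by_cases hD : e ≤ wdeg r D
  · rw [if_pos hD]
    refine Finset.sum_congr rfl ?_
    intro ab hab
    rw [coeff_pfil]
    by_cases h2 : coeff ab.2 s = 0
    · simp [h2]
    · have hd : wdeg r D = wdeg r ab.1 + δ := by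
        rw [← Finset.HasAntidiagonal.mem_antidiagonal.mp hab, wdeg_add, hs _ h2]
      rw [if_pos (by omega)]
  · rw [if_neg hD]
    symm
    refine Finset.sum_eq_zero ?_
    intro ab hab
    rw [coeff_pfil]
    by_cases h2 : coeff ab.2 s = 0
    · simp [h2]
    · have hd : wdeg r D = wdeg r ab.1 + δ := by
        rw [← Finset.HasAntidiagonal.mem_antidiagonal.mp hab, wdeg_add, hs _ h2]
      rw [if_neg (by omega), zero_mul]

theorem pfil_mem_span (r e : ℕ) (S : Set (MvPolynomial Y k))
    (hS : ∀ s ∈ S, ∃ δ, RHomog r δ s) (f : MvPolynomial Y k)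
    (hf : f ∈ Ideal.span S) :
    pfil (fun d => e ≤ wdeg r d) f ∈ Ideal.span S := by
  rw [← Ideal.submodule_span_eq] at hf
  obtain ⟨c, hc, rfl⟩ := Submodule.mem_span_set.mp hf
  rw [Finsupp.sum]
  have hmap : pfil (fun d => e ≤ wdeg r d) (∑ a ∈ c.support, c a • a)
      = ∑ a ∈ c.support, pfil (fun d => e ≤ wdeg r d) (c a • a) :=
    map_sum (pfilHom (k := k) (Y := Y) (fun d => e ≤ wdeg r d)) _ _
  rw [hmap]
  refine Ideal.sum_mem _ ?_
  intro s hsmem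
  have hsS : s ∈ S := hc hsmem
  obtain ⟨δ, hδ⟩ := hS s hsS
  show pfil (fun d => e ≤ wdeg r d) (c s • s) ∈ Ideal.span S
  rw [smul_eq_mul, pfil_mul_homog r e δ _ _ hδ]
  exact Ideal.mul_mem_left _ _ (Ideal.subset_span hsS)

/-- The ideal of polynomials all of whose monomials have row-`r` weighted degree `≥ e`. -/
def hiIdeal (r e : ℕ) : Ideal (MvPolynomial Y k) where
  carrier := {f | ∀ d, coeff d f ≠ 0 → e ≤ wdeg r d}
  zero_mem' := by intro d hd; simp at hd
  add_mem' := by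
    intro a b ha hb d hd
    rw [coeff_add] at hd
    by_cases h1 : coeff d a = 0
    · exact hb d (by simpa [h1] using hd)
    · exact ha d h1
  smul_mem' := by
    intro g f hf d hd
    rw [smul_eq_mul, coeff_mul] at hd
    obtain ⟨ab, hab, hne⟩ := Finset.exists_ne_zero_of_sum_ne_zero hd
    have h2 : coeff ab.2 f ≠ 0 := right_ne_zero_of_mul hne
    have h3 := hf ab.2 h2
    have h4 : wdeg r ab.1 + wdeg r ab.2 = wdeg r d := by
      rw [← wdeg_add, Finset.HasAntidiagonal.mem_antidiagonal.mp hab]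
    omega

theorem mem_hiIdeal {r e : ℕ} {f : MvPolynomial Y k} :
    f ∈ hiIdeal (k := k) (Y := Y) r e ↔ ∀ d, coeff d f ≠ 0 → e ≤ wdeg r d :=
  Iff.rfl

theorem mul_mem_hiIdeal {r a b : ℕ} {f g : MvPolynomial Y k}
    (hf : f ∈ hiIdeal (k := k) (Y := Y) r a) (hg : g ∈ hiIdeal (k := k) (Y := Y) r b) :
    f * g ∈ hiIdeal (k := k) (Y := Y) r (a + b) := by
  intro d hd
  rw [coeff_mul] at hd
  obtain ⟨ab, hab, hne⟩ := Finset.exists_ne_zero_of_sum_ne_zero hd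
  have h1 := hf ab.1 (left_ne_zero_of_mul hne)
  have h2 := hg ab.2 (right_ne_zero_of_mul hne)
  have h4 : wdeg r ab.1 + wdeg r ab.2 = wdeg r d := by
    rw [← wdeg_add, Finset.HasAntidiagonal.mem_antidiagonal.mp hab]
  omega

theorem pow_le_hiIdeal (r : ℕ) (Q : Ideal (MvPolynomial Y k))
    (hQ : Q = Ideal.span {f | ∃ q, ∃ h : (r, q) ∈ Y, f = MvPolynomial.X ⟨(r, q), h⟩})
    (e : ℕ) : Q ^ e ≤ hiIdeal r e := by
  induction e with
  | zero => intro f _ d _; exact Nat.zero_le _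
  | succ e ih =>
    rw [pow_succ]
    refine Ideal.mul_le.mpr ?_
    intro f hf g hg
    have hQle : Q ≤ hiIdeal (k := k) (Y := Y) r 1 := by
      rw [hQ, Ideal.span_le]
      rintro _ ⟨q, h, rfl⟩
      intro d hd
      classical
      rw [coeff_X'] at hd
      have hd' : Finsupp.single (⟨(r, q), h⟩ : Y) 1 = d := by
        by_contra hcon
        rw [if_neg hcon] at hd
        exact hd rfl
      rw [← hd', wdeg_single]
      simp [rwt]
    exact mul_mem_hiIdeal (ih hf) (hQle hg)

theorem monomial_mem_pow (r : ℕ) (Q : Ideal (MvPolynomial Y k))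
    (hQ : Q = Ideal.span {f | ∃ q, ∃ h : (r, q) ∈ Y, f = MvPolynomial.X ⟨(r, q), h⟩})
    (e : ℕ) : ∀ (d : Y →₀ ℕ) (c : k), e ≤ wdeg r d → monomial d c ∈ Q ^ e := by
  induction e with
  | zero => intro d c _; rw [pow_zero, Ideal.one_eq_top]; exact Submodule.mem_top
  | succ e ih =>
    intro d c hd
    have hwsum : wdeg r d = ∑ v ∈ d.support, d v * rwt r v := rfl
    have hpos : (∑ v ∈ d.support, d v * rwt r v) ≠ 0 := by omega
    obtain ⟨v, hv, hne⟩ := Finset.exists_ne_zero_of_sum_ne_zero hpos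
    have hdv : d v ≠ 0 := by
      intro h0; rw [h0, zero_mul] at hne; exact hne rfl
    have hrv : (v : ℕ × ℕ).1 = r := by
      by_contra hcon
      rw [rwt, if_neg hcon, mul_zero] at hne
      exact hne rfl
    set d' := d - Finsupp.single v 1 with hd'
    have hdd : d' + Finsupp.single v 1 = d := by
      rw [hd']
      exact tsub_add_cancel_of_le (Finsupp.single_le_iff.mpr (Nat.one_le_iff_ne_zero.mpr hdv))
    have hwv : rwt r v = 1 := by rw [rwt, if_pos hrv]
    have hw : wdeg r d = wdeg r d' + 1 := by
      rw [← hdd, wdeg_add, wdeg_single, hwv, one_mul]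
    have hXv : (MvPolynomial.X v : MvPolynomial Y k) ∈ Q := by
      rw [hQ]
      refine Ideal.subset_span ?_
      refine ⟨(v : ℕ × ℕ).2, ?_, ?_⟩
      · show ((r : ℕ), (v : ℕ × ℕ).2) ∈ Y
        have : ((r : ℕ), (v : ℕ × ℕ).2) = (v : ℕ × ℕ) := by
          rw [← hrv]
        rw [this]; exact v.2
      · congr 1
        apply Subtype.ext
        show (v : ℕ × ℕ) = ((r : ℕ), (v : ℕ × ℕ).2)
        rw [← hrv]
    have hmon : (monomial d c : MvPolynomial Y k)
        = monomial d' c * MvPolynomial.X v := by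
      rw [X, monomial_mul, mul_one, hdd]
    rw [pow_succ, hmon]
    exact Ideal.mul_mem_mul (ih d' c (by omega)) hXv

theorem mem_pow_of_hi (r : ℕ) (Q : Ideal (MvPolynomial Y k))
    (hQ : Q = Ideal.span {f | ∃ q, ∃ h : (r, q) ∈ Y, f = MvPolynomial.X ⟨(r, q), h⟩})
    (e : ℕ) (f : MvPolynomial Y k)
    (hf : ∀ d, coeff d f ≠ 0 → e ≤ wdeg r d) : f ∈ Q ^ e := by
  rw [← support_sum_monomial_coeff f]
  exact Ideal.sum_mem _ fun d hd =>
    monomial_mem_pow r Q hQ e d (coeff d f) (hf d (mem_support_iff.mp hd))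

theorem pfil_eq_self (r e : ℕ) (f : MvPolynomial Y k)
    (hf : ∀ d, coeff d f ≠ 0 → e ≤ wdeg r d) :
    pfil (fun d => e ≤ wdeg r d) f = f := by
  apply MvPolynomial.ext
  intro D
  rw [coeff_pfil]
  by_cases h : coeff D f = 0
  · simp [h]
  · rw [if_pos (hf D h)]

theorem pfil_hi (r e : ℕ) (f : MvPolynomial Y k) :
    ∀ d, coeff d (pfil (fun d => e ≤ wdeg r d) f) ≠ 0 → e ≤ wdeg r d := by
  intro d hd
  rw [coeff_pfil] at hd
  by_contra h
  rw [if_neg h] at hd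
  exact hd rfl

theorem homog_monomial (r : ℕ) (d : Y →₀ ℕ) :
    RHomog (k := k) r (wdeg r d) (monomial d (1 : k)) := by
  intro D hD
  classical
  rw [coeff_monomial] at hD
  by_cases h : d = D
  · rw [← h]
  · rw [if_neg h] at hD; exact absurd rfl hD

theorem homog_minor (r : ℕ) (rr cc : Fin 2 → ℕ) (h : ∀ u v, (rr u, cc v) ∈ Y) :
    ∃ δ, RHomog (k := k) r δ (minorPoly k rr cc h) := by
  classical
  refine ⟨rwt r ⟨(rr 0, cc 0), h 0 0⟩ + rwt r ⟨(rr 1, cc 1), h 1 1⟩, ?_⟩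
  have hdet : minorPoly k rr cc h =
      monomial (Finsupp.single (⟨(rr 0, cc 0), h 0 0⟩ : Y) 1
          + Finsupp.single (⟨(rr 1, cc 1), h 1 1⟩ : Y) 1) (1 : k)
      - monomial (Finsupp.single (⟨(rr 0, cc 1), h 0 1⟩ : Y) 1
          + Finsupp.single (⟨(rr 1, cc 0), h 1 0⟩ : Y) 1) (1 : k) := by
    rw [minorPoly, Matrix.det_fin_two]
    simp only [Matrix.of_apply]
    rw [X, X, X, X, monomial_mul, monomial_mul, mul_one]
  intro d hd
  rw [hdet] at hd
  rw [coeff_sub, coeff_monomial, coeff_monomial] at hd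
  by_cases h1 : Finsupp.single (⟨(rr 0, cc 0), h 0 0⟩ : Y) 1
      + Finsupp.single (⟨(rr 1, cc 1), h 1 1⟩ : Y) 1 = d
  · rw [← h1, wdeg_add, wdeg_single, wdeg_single, one_mul, one_mul]
  · by_cases h2 : Finsupp.single (⟨(rr 0, cc 1), h 0 1⟩ : Y) 1
        + Finsupp.single (⟨(rr 1, cc 0), h 1 0⟩ : Y) 1 = d
    · rw [← h2, wdeg_add, wdeg_single, wdeg_single, one_mul, one_mul]
      simp [rwt]
    · rw [if_neg h1, if_neg h2] at hd
      exact absurd (by ring) hd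
  
end AuxRowGrading

/-- Let `Y` be a `2`-connected ladder, `π : k[Y] → R_2(Y)` the quotient
map, `Q` the ideal of `k[Y]` generated by the variables in row `a_{i-1}` (where `a_0 = 1`
and `a_1, …, a_h` are the rows of the lower inside corners), `J = Q ^ e` with `e ≥ 1`.
Then for every monomial ideal `M` of `k[Y]` one has `π(J) ∩ π(M) = π(J ∩ M)`. -/
theorem image_inter_Q_pow (m n : ℕ) (k : Type) [Field k] (Y : Set (ℕ × ℕ))
    (hY : StdLadder m n Y) (hconn : TConnected m n 2 Y)
    (r : ℕ) (hr : r = 1 ∨ ∃ b, IsLowerCorner Y (r, b))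
    (Q : Ideal (MvPolynomial Y k))
    (hQ : Q = Ideal.span {f | ∃ q, ∃ h : (r, q) ∈ Y, f = MvPolynomial.X ⟨(r, q), h⟩})
    (e : ℕ) (he : 1 ≤ e)
    (M : Ideal (MvPolynomial Y k)) (hM : IsMonomialIdeal M)
    (π : MvPolynomial Y k →+* LadderRing k 2 Y)
    (hπ : π = Ideal.Quotient.mk (minorIdeal k 2 Y)) :
    Ideal.map π (Q ^ e) ⊓ Ideal.map π M = Ideal.map π (Q ^ e ⊓ M) := by
  subst hπ
  apply le_antisymm
  · intro x hx
    obtain ⟨hx1, hx2⟩ := Submodule.mem_inf.mp hx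
    obtain ⟨f, hf, rfl⟩ :=
      (Ideal.mem_map_iff_of_surjective _ Ideal.Quotient.mk_surjective).mp hx1
    obtain ⟨g, hg, hfg⟩ :=
      (Ideal.mem_map_iff_of_surjective _ Ideal.Quotient.mk_surjective).mp hx2
    obtain ⟨S₀, hS₀⟩ := hM
    have hsub : f - g ∈ minorIdeal k 2 Y := by
      rw [← Ideal.Quotient.eq]
      exact hfg.symm
    -- the "high part" selector for the row-r grading
    have hfhi : ∀ d, MvPolynomial.coeff d f ≠ 0 → e ≤ wdeg r d :=
      pow_le_hiIdeal r Q hQ e hf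
    have hf_eq : pfil (fun d => e ≤ wdeg r d) f = f := pfil_eq_self r e f hfhi
    -- high part of g stays in M
    have hgM : pfil (fun d => e ≤ wdeg r d) g ∈ M := by
      rw [hS₀] at hg ⊢
      refine pfil_mem_span r e _ ?_ g hg
      rintro s ⟨d, _, rfl⟩
      exact ⟨wdeg r d, homog_monomial r d⟩
    -- high part of g lies in Q^e
    have hgQ : pfil (fun d => e ≤ wdeg r d) g ∈ Q ^ e :=
      mem_pow_of_hi r Q hQ e _ (pfil_hi r e g)
    -- high part of f - g stays in the minor ideal
    have hiI : pfil (fun d => e ≤ wdeg r d) (f - g) ∈ minorIdeal k 2 Y := by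
      rw [minorIdeal] at hsub ⊢
      refine pfil_mem_span r e _ ?_ _ hsub
      rintro s ⟨rr, cc, hrr, hcc, hmem, rfl⟩
      exact homog_minor r rr cc hmem
    have key : f = pfil (fun d => e ≤ wdeg r d) g
        + pfil (fun d => e ≤ wdeg r d) (f - g) := by
      rw [← pfil_add, add_sub_cancel, hf_eq]
    have hmk : Ideal.Quotient.mk (minorIdeal k 2 Y) f
        = Ideal.Quotient.mk (minorIdeal k 2 Y) (pfil (fun d => e ≤ wdeg r d) g) := by
      rw [key, map_add, Ideal.Quotient.eq_zero_iff_mem.mpr hiI, add_zero]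
    rw [hmk]
    exact Ideal.mem_map_of_mem _ (Submodule.mem_inf.mpr ⟨hgQ, hgM⟩)
  · exact le_inf (Ideal.map_mono inf_le_left) (Ideal.map_mono inf_le_right)

end LadderDet
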